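/- arXiv:math/0612188 — 4 statements merged into one kernel-verified Lean document; each statement's English description precedes it below -/
import Mathlib

section
/- Let k be a field with char(k) ≠ 2 and let A = B = k[Z_2]. The linear map τ determined by τ(b⊗a) = -(1⊗1) + (1⊗b) + (a⊗1) (together with the unitality conditions) is a twisting map. -/
open TensorProduct

noncomputable section

/-- The group algebra `k[ℤ₂]`. -/
abbrev GA (k : Type*) [Field k] := AddMonoidAlgebra k (ZMod 2)

/-- The group-like generator `a` of `k[ℤ₂]`, satisfying `a² = 1`. -/
def gen (k : Type*) [Field k] : GA k := AddMonoidAlgebra.single (1 : ZMod 2) (1 : k)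

/-- `τ : B ⊗ A → A ⊗ B` is a twisting map: unitality plus compatibility with
the multiplications of `A` and `B`. -/
def IsTwistingMap (k : Type*) [Field k] (A B : Type*) [Ring A] [Ring B]
    [Algebra k A] [Algebra k B] (τ : B ⊗[k] A →ₗ[k] A ⊗[k] B) : Prop :=
  (∀ b : B, τ (b ⊗ₜ 1) = 1 ⊗ₜ b) ∧
  (∀ a : A, τ (1 ⊗ₜ a) = a ⊗ₜ 1) ∧
  (τ ∘ₗ LinearMap.lTensor B (LinearMap.mul' k A)
      ∘ₗ (TensorProduct.assoc k B A A).toLinearMap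
    = LinearMap.rTensor B (LinearMap.mul' k A)
        ∘ₗ (TensorProduct.assoc k A A B).symm.toLinearMap
        ∘ₗ LinearMap.lTensor A τ
        ∘ₗ (TensorProduct.assoc k A B A).toLinearMap
        ∘ₗ LinearMap.rTensor A τ) ∧
  (τ ∘ₗ LinearMap.rTensor A (LinearMap.mul' k B)
      ∘ₗ (TensorProduct.assoc k B B A).symm.toLinearMap
    = LinearMap.lTensor A (LinearMap.mul' k B)
        ∘ₗ (TensorProduct.assoc k A B B).toLinearMap
        ∘ₗ LinearMap.rTensor B τ
        ∘ₗ (TensorProduct.assoc k B A B).symm.toLinearMap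
        ∘ₗ LinearMap.lTensor B τ)


section Aux

variable (k : Type*) [Field k]

def bA : Module.Basis (ZMod 2) k (GA k) := AddMonoidAlgebra.basis (ZMod 2) k

def bT : Module.Basis (ZMod 2 × ZMod 2) k (GA k ⊗[k] GA k) := (bA k).tensorProduct (bA k)

def Tval : ZMod 2 × ZMod 2 → GA k ⊗[k] GA k := fun p =>
  if p = (1,1) then
    -(AddMonoidAlgebra.single (0:ZMod 2) (1:k) ⊗ₜ AddMonoidAlgebra.single (0:ZMod 2) (1:k))
      + AddMonoidAlgebra.single (0:ZMod 2) (1:k) ⊗ₜ AddMonoidAlgebra.single (1:ZMod 2) (1:k)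
      + AddMonoidAlgebra.single (1:ZMod 2) (1:k) ⊗ₜ AddMonoidAlgebra.single (0:ZMod 2) (1:k)
  else AddMonoidAlgebra.single p.2 (1:k) ⊗ₜ AddMonoidAlgebra.single p.1 (1:k)

def tau : GA k ⊗[k] GA k →ₗ[k] GA k ⊗[k] GA k := (bT k).constr k (Tval k)

lemma bA_apply (i : ZMod 2) : bA k i = AddMonoidAlgebra.single i (1:k) := rfl

lemma one_def : (1 : GA k) = AddMonoidAlgebra.single (0:ZMod 2) (1:k) := rfl

lemma single_mul (i j : ZMod 2) :
    (AddMonoidAlgebra.single i (1:k)) * (AddMonoidAlgebra.single j (1:k))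
      = AddMonoidAlgebra.single (i + j) (1:k) := by
  simpa using AddMonoidAlgebra.single_mul_single (a₁ := i) (a₂ := j) (b₁ := (1:k)) (b₂ := 1)

lemma tau_single (i j : ZMod 2) :
    tau k (AddMonoidAlgebra.single i (1:k) ⊗ₜ AddMonoidAlgebra.single j (1:k)) = Tval k (i,j) := by
  have := (bT k).constr_basis k (Tval k) (i,j)
  simpa [tau, bT, bA, Module.Basis.tensorProduct_apply] using this

lemma two : (1 + 1 : ZMod 2) = 0 := rfl

lemma em2 : ∀ x : ZMod 2, x = 0 ∨ x = 1 := by decide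

lemma unit_left (b : GA k) : tau k (b ⊗ₜ 1) = 1 ⊗ₜ b := by
  induction b using AddMonoidAlgebra.induction_linear with
  | zero => simp
  | add f g hf hg => rw [add_tmul, map_add, hf, hg, tmul_add]
  | single i r =>
    have : (AddMonoidAlgebra.single i r : GA k) = r • AddMonoidAlgebra.single i (1:k) := by
      simp [AddMonoidAlgebra.smul_single]
    rw [this, ← smul_tmul', map_smul, one_def, tau_single, tmul_smul]
    rcases em2 i with rfl | rfl <;> simp [Tval, one_def]

lemma unit_right (a : GA k) : tau k ((1:GA k) ⊗ₜ a) = a ⊗ₜ 1 := by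
  induction a using AddMonoidAlgebra.induction_linear with
  | zero => simp
  | add f g hf hg => rw [tmul_add, map_add, hf, hg, add_tmul]
  | single i r =>
    have : (AddMonoidAlgebra.single i r : GA k) = r • AddMonoidAlgebra.single i (1:k) := by
      simp [AddMonoidAlgebra.smul_single]
    rw [this, tmul_smul, map_smul, one_def, tau_single, ← smul_tmul']
    rcases em2 i with rfl | rfl <;> simp [Tval, one_def]


section helpers
variable {M N P : Type*} [AddCommGroup M] [AddCommGroup N] [AddCommGroup P]
  [Module k M] [Module k N] [Module k P]

section app
variable {N : Type*} [AddCommGroup N] [Module k N]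

lemma app_neg2 (g : GA k ⊗[k] GA k →ₗ[k] N) (x : GA k ⊗[k] GA k) :
    g (-x) = -g x := LinearMap.map_neg g x

lemma app_add2 (g : GA k ⊗[k] GA k →ₗ[k] N) (x y : GA k ⊗[k] GA k) :
    g (x + y) = g x + g y := LinearMap.map_add g x y

lemma app_neg3 (g : (GA k ⊗[k] GA k) ⊗[k] GA k →ₗ[k] N) (x : (GA k ⊗[k] GA k) ⊗[k] GA k) :
    g (-x) = -g x := LinearMap.map_neg g x

lemma app_add3 (g : (GA k ⊗[k] GA k) ⊗[k] GA k →ₗ[k] N) (x y : (GA k ⊗[k] GA k) ⊗[k] GA k) :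
    g (x + y) = g x + g y := LinearMap.map_add g x y

lemma app_neg3' (g : GA k ⊗[k] (GA k ⊗[k] GA k) →ₗ[k] N) (x : GA k ⊗[k] (GA k ⊗[k] GA k)) :
    g (-x) = -g x := LinearMap.map_neg g x

lemma app_add3' (g : GA k ⊗[k] (GA k ⊗[k] GA k) →ₗ[k] N) (x y : GA k ⊗[k] (GA k ⊗[k] GA k)) :
    g (x + y) = g x + g y := LinearMap.map_add g x y

end app

lemma lmap_neg (f : M →ₗ[k] N) (x : M) : f (-x) = -f x := LinearMap.map_neg f x

lemma lmap_add (f : M →ₗ[k] N) (x y : M) : f (x + y) = f x + f y := LinearMap.map_add f x y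

lemma assoc_neg (x : (M ⊗[k] N) ⊗[k] P) :
    TensorProduct.assoc k M N P (-x) = -(TensorProduct.assoc k M N P x) :=
  LinearMap.map_neg (TensorProduct.assoc k M N P).toLinearMap x

lemma assoc_symm_neg (x : M ⊗[k] (N ⊗[k] P)) :
    (TensorProduct.assoc k M N P).symm (-x) = -((TensorProduct.assoc k M N P).symm x) :=
  LinearMap.map_neg (TensorProduct.assoc k M N P).symm.toLinearMap x

lemma assoc_add (x y : (M ⊗[k] N) ⊗[k] P) :
    TensorProduct.assoc k M N P (x + y)
      = TensorProduct.assoc k M N P x + TensorProduct.assoc k M N P y :=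
  LinearMap.map_add (TensorProduct.assoc k M N P).toLinearMap x y

lemma assoc_symm_add (x y : M ⊗[k] (N ⊗[k] P)) :
    (TensorProduct.assoc k M N P).symm (x + y)
      = (TensorProduct.assoc k M N P).symm x + (TensorProduct.assoc k M N P).symm y :=
  LinearMap.map_add (TensorProduct.assoc k M N P).symm.toLinearMap x y

end helpers

lemma lT_tau_neg (x : GA k ⊗[k] (GA k ⊗[k] GA k)) :
    LinearMap.lTensor (GA k) (tau k) (-x) = -LinearMap.lTensor (GA k) (tau k) x := by
  exact (LinearMap.lTensor (GA k) (tau k)).toAddMonoidHom.map_neg x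

lemma rT_tau_neg (x : (GA k ⊗[k] GA k) ⊗[k] GA k) :
    LinearMap.rTensor (GA k) (tau k) (-x) = -LinearMap.rTensor (GA k) (tau k) x := by
  exact map_neg (LinearMap.rTensor (GA k) (tau k)) x

lemma tau_neg (x : GA k ⊗[k] GA k) : tau k (-x) = -tau k x := LinearMap.map_neg _ x

set_option maxHeartbeats 2000000 in
set_option synthInstance.maxHeartbeats 400000 in
lemma cond1 : tau k ∘ₗ LinearMap.lTensor (GA k) (LinearMap.mul' k (GA k))
      ∘ₗ (TensorProduct.assoc k (GA k) (GA k) (GA k)).toLinearMap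
    = LinearMap.rTensor (GA k) (LinearMap.mul' k (GA k))
        ∘ₗ (TensorProduct.assoc k (GA k) (GA k) (GA k)).symm.toLinearMap
        ∘ₗ LinearMap.lTensor (GA k) (tau k)
        ∘ₗ (TensorProduct.assoc k (GA k) (GA k) (GA k)).toLinearMap
        ∘ₗ LinearMap.rTensor (GA k) (tau k) := by
  apply Module.Basis.ext ((bT k).tensorProduct (bA k))
  rintro ⟨⟨i, j⟩, l⟩
  rw [Module.Basis.tensorProduct_apply]
  rw [show bT k (i, j) = bA k i ⊗ₜ bA k j from Module.Basis.tensorProduct_apply _ _ _ _]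
  rcases em2 i with rfl | rfl <;> rcases em2 j with rfl | rfl <;> rcases em2 l with rfl | rfl <;>
    simp [bA_apply, assoc_tmul, assoc_symm_tmul, LinearMap.mul'_apply, single_mul,
      tau_single, Tval, tmul_add, add_tmul, tmul_neg, neg_tmul, two, zero_add, add_zero, map_neg,
      map_add, smul_tmul', tmul_smul, map_smul, neg_smul, one_smul,
      assoc_neg, assoc_symm_neg, assoc_add, assoc_symm_add, lmap_neg, lmap_add,
      app_neg2, app_add2, app_neg3, app_add3, app_neg3', app_add3',
      lT_tau_neg, rT_tau_neg, tau_neg]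

set_option maxHeartbeats 2000000 in
set_option synthInstance.maxHeartbeats 400000 in
lemma cond2 : tau k ∘ₗ LinearMap.rTensor (GA k) (LinearMap.mul' k (GA k))
      ∘ₗ (TensorProduct.assoc k (GA k) (GA k) (GA k)).symm.toLinearMap
    = LinearMap.lTensor (GA k) (LinearMap.mul' k (GA k))
        ∘ₗ (TensorProduct.assoc k (GA k) (GA k) (GA k)).toLinearMap
        ∘ₗ LinearMap.rTensor (GA k) (tau k)
        ∘ₗ (TensorProduct.assoc k (GA k) (GA k) (GA k)).symm.toLinearMap
        ∘ₗ LinearMap.lTensor (GA k) (tau k) := by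
  apply Module.Basis.ext ((bA k).tensorProduct (bT k))
  rintro ⟨i, j, l⟩
  rw [Module.Basis.tensorProduct_apply]
  rw [show bT k (j, l) = bA k j ⊗ₜ bA k l from Module.Basis.tensorProduct_apply _ _ _ _]
  rcases em2 i with rfl | rfl <;> rcases em2 j with rfl | rfl <;> rcases em2 l with rfl | rfl <;>
    simp [bA_apply, assoc_tmul, assoc_symm_tmul, LinearMap.mul'_apply, single_mul,
      tau_single, Tval, tmul_add, add_tmul, tmul_neg, neg_tmul, two, zero_add, add_zero, map_neg,
      map_add, smul_tmul', tmul_smul, map_smul, neg_smul, one_smul,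
      assoc_neg, assoc_symm_neg, assoc_add, assoc_symm_add, lmap_neg, lmap_add,
      app_neg2, app_add2, app_neg3, app_add3, app_neg3', app_add3',
      lT_tau_neg, rT_tau_neg, tau_neg] <;>
    abel

end Aux

/-- For `char k ≠ 2`, the linear map determined by
`τ(b⊗a) = -(1⊗1) + (1⊗b) + (a⊗1)` (together with unitality) is a twisting map. -/
theorem stmt3 (k : Type*) [Field k] (hchar : ringChar k ≠ 2) :
    ∃ τ : GA k ⊗[k] GA k →ₗ[k] GA k ⊗[k] GA k,
      IsTwistingMap k (GA k) (GA k) τ ∧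
      τ (gen k ⊗ₜ gen k) =
        -((1 : GA k) ⊗ₜ (1 : GA k)) + (1 : GA k) ⊗ₜ gen k + gen k ⊗ₜ (1 : GA k) := by
  refine ⟨tau k, ⟨unit_left k, unit_right k, cond1 k, cond2 k⟩, ?_⟩
  have h : gen k = AddMonoidAlgebra.single (1 : ZMod 2) (1:k) := rfl
  rw [h, tau_single]
  simp [Tval, one_def, h]
end
end

section
/- Let k be a field with char(k) = 2 and let A = B = k[Z_2]. If τ: B⊗A → A⊗B is a twisting map, then τ(b⊗a) is either α(1⊗1) + (a⊗b) for some α ∈ k, or α(1⊗1) + α(1⊗b) + α(a⊗1) + (α+1)(a⊗b) for some α ∈ k. -/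
open TensorProduct

noncomputable section

section Aux

variable (k : Type*) [Field k]

/-- Coefficient functional on the tensor square. -/
def φ (i j : ZMod 2) : GA k ⊗[k] GA k →ₗ[k] k :=
  (TensorProduct.lid k k).toLinearMap ∘ₗ TensorProduct.map (Finsupp.lapply i ∘ₗ (AddMonoidAlgebra.coeffLinearEquiv k).toLinearMap)
    (Finsupp.lapply j ∘ₗ (AddMonoidAlgebra.coeffLinearEquiv k).toLinearMap)

lemma φ_tmul (i j : ZMod 2) (x y : GA k) : φ k i j (x ⊗ₜ y) = x.coeff i * y.coeff j := by
  simp only [φ, LinearMap.comp_apply, TensorProduct.map_tmul, LinearEquiv.coe_toLinearMap,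
    TensorProduct.lid_tmul, smul_eq_mul]
  rfl

lemma one_apply0 : (1 : GA k).coeff (0 : ZMod 2) = 1 := by
  simp [AddMonoidAlgebra.one_def, AddMonoidAlgebra.coeff_single, Finsupp.single_apply]
lemma one_apply1 : (1 : GA k).coeff (1 : ZMod 2) = 0 := by
  simp [AddMonoidAlgebra.one_def, AddMonoidAlgebra.coeff_single, Finsupp.single_apply]
lemma gen_apply0 : (gen k).coeff (0 : ZMod 2) = 0 := by
  simp [gen, AddMonoidAlgebra.coeff_single, Finsupp.single_apply]
lemma gen_apply1 : (gen k).coeff (1 : ZMod 2) = 1 := by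
  simp [gen, AddMonoidAlgebra.coeff_single, Finsupp.single_apply]

lemma gen_mul_gen : gen k * gen k = 1 := by
  simp [gen, AddMonoidAlgebra.single_mul_single, AddMonoidAlgebra.one_def,
    (by decide : (1 + 1 : ZMod 2) = 0)]

lemma hdecomp (x : GA k) : x = x.coeff 0 • (1 : GA k) + x.coeff 1 • gen k := by
  ext i
  have : (x.coeff 0 • (1 : GA k) + x.coeff 1 • gen k).coeff i
      = x.coeff 0 * ((1 : GA k).coeff i) + x.coeff 1 * ((gen k).coeff i) := rfl
  rw [this]
  rcases (by decide : ∀ j : ZMod 2, j = 0 ∨ j = 1) i with rfl | rfl <;>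
    simp [gen, AddMonoidAlgebra.one_def, AddMonoidAlgebra.coeff_single, Finsupp.single_apply]

lemma trepr (t : GA k ⊗[k] GA k) :
    t = φ k 0 0 t • ((1 : GA k) ⊗ₜ (1 : GA k)) + φ k 0 1 t • ((1 : GA k) ⊗ₜ gen k)
      + φ k 1 0 t • (gen k ⊗ₜ (1 : GA k)) + φ k 1 1 t • (gen k ⊗ₜ gen k) := by
  induction t with
  | zero => simp
  | tmul x y =>
      rw [φ_tmul, φ_tmul, φ_tmul, φ_tmul]
      conv_lhs => rw [hdecomp k x, hdecomp k y]
      simp [tmul_add, add_tmul, smul_tmul', tmul_smul, smul_smul, mul_comm]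
      abel
  | add x y ihx ihy =>
      simp only [map_add, add_smul]
      conv_lhs => rw [ihx, ihy]
      abel

lemma smul_apply' (c : k) (x : GA k) (i : ZMod 2) : (c • x).coeff i = c * x.coeff i := rfl

end Aux

/-- For `char k = 2`, any twisting map on `k[ℤ₂] ⊗ k[ℤ₂]` has
`τ(b⊗a) = α(1⊗1) + a⊗b` or `τ(b⊗a) = α(1⊗1) + α(1⊗b) + α(a⊗1) + (α+1)(a⊗b)`
for some `α ∈ k`. -/
theorem stmt5 (k : Type*) [Field k] (hchar : ringChar k = 2)
    (τ : GA k ⊗[k] GA k →ₗ[k] GA k ⊗[k] GA k)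
    (hτ : IsTwistingMap k (GA k) (GA k) τ) :
    (∃ α : k, τ (gen k ⊗ₜ gen k)
        = α • ((1 : GA k) ⊗ₜ (1 : GA k)) + gen k ⊗ₜ gen k) ∨
    (∃ α : k, τ (gen k ⊗ₜ gen k)
        = α • ((1 : GA k) ⊗ₜ (1 : GA k)) + α • ((1 : GA k) ⊗ₜ gen k)
          + α • (gen k ⊗ₜ (1 : GA k)) + (α + 1) • (gen k ⊗ₜ gen k)) := by
  obtain ⟨h1, h2, h3, h4⟩ := hτ
  haveI : CharP k 2 := hchar ▸ ringChar.charP k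
  have two0 : (2 : k) = 0 := CharP.cast_eq_zero k 2
  have hneg : (-1 : k) = 1 := by linear_combination -two0
  set α := φ k 0 0 (τ (gen k ⊗ₜ gen k)) with hα
  set β := φ k 0 1 (τ (gen k ⊗ₜ gen k)) with hβ
  set γ := φ k 1 0 (τ (gen k ⊗ₜ gen k)) with hγ
  set δ := φ k 1 1 (τ (gen k ⊗ₜ gen k)) with hδ
  have hT : τ (gen k ⊗ₜ gen k)
      = α • ((1 : GA k) ⊗ₜ (1 : GA k)) + β • ((1 : GA k) ⊗ₜ gen k)
        + γ • (gen k ⊗ₜ (1 : GA k)) + δ • (gen k ⊗ₜ gen k) := trepr k _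
  have E3 := LinearMap.congr_fun h3 ((gen k ⊗ₜ gen k) ⊗ₜ gen k)
  have E4 := LinearMap.congr_fun h4 (gen k ⊗ₜ (gen k ⊗ₜ gen k))
  simp only [LinearMap.comp_apply, LinearEquiv.coe_toLinearMap, assoc_tmul, assoc_symm_tmul,
    LinearMap.lTensor_tmul, LinearMap.rTensor_tmul, LinearMap.mul'_apply, gen_mul_gen,
    h1, h2, hT, map_add, map_smul, add_tmul, ← smul_tmul', tmul_add, tmul_smul,
    smul_mul_assoc, mul_smul_comm, smul_smul, one_mul, mul_one] at E3 E4
  have c00 := congrArg (φ k 0 0) E3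
  have c01 := congrArg (φ k 0 1) E3
  have c10 := congrArg (φ k 1 0) E3
  have d00 := congrArg (φ k 0 0) E4
  have d10 := congrArg (φ k 1 0) E4
  simp only [map_add, map_smul, φ_tmul, one_apply0, one_apply1, gen_apply0, gen_apply1,
    smul_apply', smul_eq_mul, mul_one, mul_zero, zero_mul, one_mul, add_zero, zero_add]
    at c00 c01 c10 d00 d10
  have hbd : (β + δ) * (β + δ) = 1 := by linear_combination c01.symm + β * δ * two0
  have hgd : (γ + δ) * (γ + δ) = 1 := by linear_combination d10.symm + γ * δ * two0
  have hbd1 : β + δ = 1 := by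
    rcases mul_self_eq_one_iff.mp hbd with h | h
    · exact h
    · exact h.trans hneg
  have hgd1 : γ + δ = 1 := by
    rcases mul_self_eq_one_iff.mp hgd with h | h
    · exact h
    · exact h.trans hneg
  have hδval : δ = β + 1 := by linear_combination hbd1 - β * two0
  have hγval : γ = β := by linear_combination hgd1 - hbd1
  have key : β * (α + β) = 0 := by
    linear_combination (-1 : k) * c00 - (1 + δ) * hγval - β * hδval - β * two0
  rcases mul_eq_zero.mp key with hb0 | hab
  · left
    exact ⟨α, by rw [hT, hγval, hδval, hb0]; simp⟩
  · right
    have hba : β = α := by linear_combination - hab + β * two0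
    exact ⟨α, by rw [hT, hγval, hδval, hba]⟩
end
end

section
/- Let k be a field. In the algebra S = k{u,v} ⊗ k[X]/(X²-X) with multiplication determined by Xu = -a_u·u + a_u·v + vX and Xv = a_u·u - a_u·v + uX (where a_u ∈ k, a_v = -1 - a_u), the elements satisfy (vXu)(uXv) = a_u a_v · v and (uXv)(vXu) = a_u a_v · u. -/
/-- In the algebra `S = k{u,v} ⊗ k[X]/(X²-X)` (noncommutative duplicate of `k²`
for the round-trip quiver), with multiplication determined by
`Xu = -a_u·u + a_u·v + vX` and `Xv = a_u·u - a_u·v + uX` (where `a_v = -1 - a_u`),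
one has `(vXu)(uXv) = a_u a_v · v` and `(uXv)(vXu) = a_u a_v · u`. -/
theorem stmt17 (k : Type*) [Field k] (S : Type*) [Ring S] [Algebra k S]
    (u v X : S) (a_u a_v : k) (hav : a_v = -1 - a_u)
    (huv : u + v = 1) (hu : u * u = u) (hv : v * v = v)
    (huv0 : u * v = 0) (hvu0 : v * u = 0) (hX : X * X = X)
    (hXu : X * u = -(a_u • u) + a_u • v + v * X)
    (hXv : X * v = a_u • u - a_u • v + u * X) :
    (v * X * u) * (u * X * v) = (a_u * a_v) • v ∧
    (u * X * v) * (v * X * u) = (a_u * a_v) • u := by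
  have h1 : v * X * u = a_u • v + v * X := by
    rw [mul_assoc, hXu]
    simp only [mul_add, mul_neg, mul_smul_comm, ← mul_assoc, hvu0, hv]
    simp
  have h2 : u * X * v = a_u • u + u * X := by
    rw [mul_assoc, hXv]
    simp only [mul_sub, mul_add, mul_smul_comm, ← mul_assoc, hu, huv0]
    simp
  have h3 : v * X * v = -(a_u • v) := by
    rw [mul_assoc, hXv]
    simp only [mul_sub, mul_add, mul_smul_comm, ← mul_assoc, hvu0, hv]
    simp
  have h4 : u * X * u = -(a_u • u) := by
    rw [mul_assoc, hXu]
    simp only [mul_add, mul_neg, mul_smul_comm, ← mul_assoc, hu, huv0]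
    simp
  constructor
  · have : (v * X * u) * (u * X * v) = (v * X * u) * (X * v) := by
      rw [show (v * X * u) * (u * X * v) = (v * X * (u * u)) * (X * v) by
        simp only [mul_assoc], hu]
    rw [this, h1, add_mul, smul_mul_assoc]
    rw [show v * (X * v) = v * X * v from (mul_assoc _ _ _).symm, h3,
      show v * X * (X * v) = v * (X * X) * v by simp only [mul_assoc], hX, h3, hav]
    module
  · have : (u * X * v) * (v * X * u) = (u * X * v) * (X * u) := by
      rw [show (u * X * v) * (v * X * u) = (u * X * (v * v)) * (X * u) by
        simp only [mul_assoc], hv]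
    rw [this, h2, add_mul, smul_mul_assoc]
    rw [show u * (X * u) = u * X * u from (mul_assoc _ _ _).symm, h4,
      show u * X * (X * u) = u * (X * X) * u by simp only [mul_assoc], hX, h4, hav]
    module
end

section
/- Let k be a field with char(k) ≠ 2. The map f: A_{-2} → A_2 defined on the basis {1⊗1, 1⊗b, a⊗1, a⊗b} by f(1⊗1)=1⊗1, f(1⊗b)=a⊗1, f(a⊗1)=(1⊗b)-2(a⊗1), f(a⊗b)=-(a⊗b), where A_q denotes the twisted tensor product k[Z_2]⊗_τ k[Z_2] with relations a²=b²=1 and ba = q·1 - ab, is an algebra isomorphism. -/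
noncomputable section

/-- The relations `a² = 1`, `b² = 1`, `ab + ba = q` on the free algebra `k⟨a,b⟩`,
where `a = ι true` and `b = ι false`. -/
inductive AqRel (k : Type*) [Field k] (q : k) :
    FreeAlgebra k Bool → FreeAlgebra k Bool → Prop
  | aa : AqRel k q (FreeAlgebra.ι k true * FreeAlgebra.ι k true) 1
  | bb : AqRel k q (FreeAlgebra.ι k false * FreeAlgebra.ι k false) 1
  | anti : AqRel k q
      (FreeAlgebra.ι k true * FreeAlgebra.ι k false
        + FreeAlgebra.ι k false * FreeAlgebra.ι k true)
      (algebraMap k (FreeAlgebra k Bool) q)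

/-- `A_q = k⟨a,b | a² = 1, b² = 1, ab + ba = q⟩`. -/
abbrev Aq (k : Type*) [Field k] (q : k) := RingQuot (AqRel k q)

/-- The class of the generator `a` in `A_q`. -/
def aE (k : Type*) [Field k] (q : k) : Aq k q :=
  RingQuot.mkAlgHom k (AqRel k q) (FreeAlgebra.ι k true)

/-- The class of the generator `b` in `A_q`. -/
def bE (k : Type*) [Field k] (q : k) : Aq k q :=
  RingQuot.mkAlgHom k (AqRel k q) (FreeAlgebra.ι k false)

lemma aE_def (k : Type*) [Field k] (q : k) :
    RingQuot.mkAlgHom k (AqRel k q) (FreeAlgebra.ι k true) = aE k q := rfl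

lemma bE_def (k : Type*) [Field k] (q : k) :
    RingQuot.mkAlgHom k (AqRel k q) (FreeAlgebra.ι k false) = bE k q := rfl

lemma aa_rel (k : Type*) [Field k] (q : k) : aE k q * aE k q = 1 := by
  have h := RingQuot.mkAlgHom_rel k (AqRel.aa (k := k) (q := q))
  simpa [aE, map_mul] using h

lemma bb_rel (k : Type*) [Field k] (q : k) : bE k q * bE k q = 1 := by
  have h := RingQuot.mkAlgHom_rel k (AqRel.bb (k := k) (q := q))
  simpa [bE, map_mul] using h

lemma anti_rel (k : Type*) [Field k] (q : k) :
    aE k q * bE k q + bE k q * aE k q = algebraMap k (Aq k q) q := by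
  have h := RingQuot.mkAlgHom_rel k (AqRel.anti (k := k) (q := q))
  simpa [aE, bE, map_mul, map_add] using h

lemma anti_rel2 (k : Type*) [Field k] :
    aE k 2 * bE k 2 + bE k 2 * aE k 2 = 2 := by
  have := anti_rel k 2
  rwa [map_ofNat] at this

lemma anti_relm2 (k : Type*) [Field k] :
    aE k (-2) * bE k (-2) + bE k (-2) * aE k (-2) = -2 := by
  have := anti_rel k (-2)
  rwa [map_neg, map_ofNat] at this


section KeyIdentities
variable {R : Type*} [Ring R] (a b : R)

lemma key1 : (b - 2 * a) * (b - 2 * a) = b * b + 4 * (a * a) - 2 * (a * b + b * a) := by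
  noncomm_ring

lemma key2 : (b - 2 * a) * a + a * (b - 2 * a) = a * b + b * a - 4 * (a * a) := by
  noncomm_ring

lemma key3 : (a + 2 * b) * (a + 2 * b) = a * a + 4 * (b * b) + 2 * (a * b + b * a) := by
  noncomm_ring

lemma key4 : b * (a + 2 * b) + (a + 2 * b) * b = a * b + b * a + 4 * (b * b) := by
  noncomm_ring

lemma key5 : (b - 2 * a) * a = b * a - 2 * (a * a) := by
  noncomm_ring

end KeyIdentities

/-- The forward algebra hom `A_{-2} → A_2`. -/
def Fhom (k : Type*) [Field k] : Aq k (-2) →ₐ[k] Aq k 2 :=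
  RingQuot.liftAlgHom k
    ⟨FreeAlgebra.lift k (fun t => if t then bE k 2 - 2 * aE k 2 else aE k 2), by
      intro x y h
      induction h with
      | aa =>
        simp only [map_mul, map_one, FreeAlgebra.lift_ι_apply, if_true]
        have key := key1 (aE k 2) (bE k 2)
        rw [key, aa_rel, bb_rel, anti_rel2]; norm_num
      | bb =>
        simp only [map_mul, map_one, FreeAlgebra.lift_ι_apply]
        simpa using aa_rel k 2
      | anti =>
        simp only [map_mul, map_add, FreeAlgebra.lift_ι_apply, AlgHom.commutes,
          Bool.false_eq_true, if_true, if_false]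
        have key := key2 (aE k 2) (bE k 2)
        rw [key, aa_rel, anti_rel2, map_neg, map_ofNat]; norm_num⟩

/-- The inverse algebra hom `A_2 → A_{-2}`. -/
def Ghom (k : Type*) [Field k] : Aq k 2 →ₐ[k] Aq k (-2) :=
  RingQuot.liftAlgHom k
    ⟨FreeAlgebra.lift k (fun t => if t then bE k (-2) else aE k (-2) + 2 * bE k (-2)), by
      intro x y h
      induction h with
      | aa =>
        simp only [map_mul, map_one, FreeAlgebra.lift_ι_apply, if_true]
        exact bb_rel k (-2)
      | bb =>
        simp only [map_mul, map_one, FreeAlgebra.lift_ι_apply, Bool.false_eq_true, if_false]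
        have key := key3 (aE k (-2)) (bE k (-2))
        rw [key, aa_rel, bb_rel, anti_relm2]; norm_num
      | anti =>
        simp only [map_mul, map_add, FreeAlgebra.lift_ι_apply, AlgHom.commutes,
          Bool.false_eq_true, if_true, if_false]
        have key := key4 (aE k (-2)) (bE k (-2))
        rw [key, bb_rel, anti_relm2, map_ofNat]; norm_num⟩

lemma Fhom_a (k : Type*) [Field k] : Fhom k (aE k (-2)) = bE k 2 - 2 * aE k 2 := by
  simp [Fhom, aE, RingQuot.liftAlgHom_mkAlgHom_apply]

lemma Fhom_b (k : Type*) [Field k] : Fhom k (bE k (-2)) = aE k 2 := by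
  simp [Fhom, bE, RingQuot.liftAlgHom_mkAlgHom_apply]

lemma Ghom_a (k : Type*) [Field k] : Ghom k (aE k 2) = bE k (-2) := by
  simp [Ghom, aE, RingQuot.liftAlgHom_mkAlgHom_apply]

lemma Ghom_b (k : Type*) [Field k] : Ghom k (bE k 2) = aE k (-2) + 2 * bE k (-2) := by
  simp [Ghom, bE, RingQuot.liftAlgHom_mkAlgHom_apply]

/-- For `char k ≠ 2`, the map `f : A_{-2} → A_2` with `f(1) = 1`, `f(b) = a`,
`f(a) = b - 2a`, `f(ab) = -ab` is an algebra isomorphism. -/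
theorem stmt19 (k : Type*) [Field k] (hchar : ringChar k ≠ 2) :
    ∃ f : Aq k (-2) ≃ₐ[k] Aq k 2,
      f 1 = 1 ∧
      f (bE k (-2)) = aE k 2 ∧
      f (aE k (-2)) = bE k 2 - 2 * aE k 2 ∧
      f (aE k (-2) * bE k (-2)) = -(aE k 2 * bE k 2) := by
  have hGF : (Ghom k).comp (Fhom k) = AlgHom.id k (Aq k (-2)) := by
    apply RingQuot.ringQuot_ext'
    apply FreeAlgebra.hom_ext
    funext t
    cases t <;>
      simp only [AlgHom.coe_comp, Function.comp_apply, AlgHom.coe_id, id_eq,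
        AlgHom.comp_apply, aE_def, bE_def, Fhom_a, Fhom_b, map_sub, map_mul, map_ofNat,
        Ghom_a, Ghom_b, map_one]
    · abel
  have hFG : (Fhom k).comp (Ghom k) = AlgHom.id k (Aq k 2) := by
    apply RingQuot.ringQuot_ext'
    apply FreeAlgebra.hom_ext
    funext t
    cases t <;>
      simp only [AlgHom.coe_comp, Function.comp_apply, AlgHom.coe_id, id_eq,
        AlgHom.comp_apply, aE_def, bE_def, Ghom_a, Ghom_b, map_add, map_mul, map_ofNat,
        Fhom_a, Fhom_b, map_one]
    · abel
  let f : Aq k (-2) ≃ₐ[k] Aq k 2 := AlgEquiv.ofAlgHom (Fhom k) (Ghom k) hFG hGF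
  have happ : ∀ x, f x = Fhom k x := fun _ => rfl
  refine ⟨f, by rw [happ]; exact map_one _, by rw [happ]; exact Fhom_b k,
    by rw [happ]; exact Fhom_a k, ?_⟩
  rw [happ, map_mul, Fhom_a, Fhom_b]
  have key := key5 (aE k 2) (bE k 2)
  have hba : bE k 2 * aE k 2 = 2 - aE k 2 * bE k 2 :=
    eq_sub_of_add_eq' (anti_rel2 k)
  rw [key, aa_rel, hba, mul_one]; abel
end
end
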